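/- If n is a natural number with n ≡ 0 (mod 4) and n ≥ 4, then the automorphism group of Z_n × Z_2 has order 4·φ(n), where φ is the Euler totient function. -/

import Mathlib

namespace AutAux

variable {n : ℕ}

def ee (n : ℕ) : ZMod n := ((n / 2 : ℕ) : ZMod n)

def pii (h : 2 ∣ n) : ZMod n →+* ZMod 2 := ZMod.castHom h (ZMod 2)

def iot (n : ℕ) : ZMod 2 → ZMod n := fun y => y.val • ee n

lemma two_eq_zero : (1 + 1 : ZMod 2) = 0 := rfl

lemma iot_zero : iot n 0 = 0 := by simp [iot]

lemma iot_one : iot n 1 = ee n := by simp [iot, ZMod.val_one]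

lemma ee_add_ee (h : 2 ∣ n) : ee n + ee n = 0 := by
  have : (n / 2 + n / 2) = n := by omega
  rw [ee, ← Nat.cast_add, this, ZMod.natCast_self]

lemma iot_add (h : 2 ∣ n) (u v : ZMod 2) : iot n (u + v) = iot n u + iot n v := by
  rcases (show ∀ u : ZMod 2, u = 0 ∨ u = 1 by decide) u with rfl | rfl <;> rcases (show ∀ u : ZMod 2, u = 0 ∨ u = 1 by decide) v with rfl | rfl <;>
    simp [two_eq_zero, iot_zero, iot_one, ee_add_ee h]

lemma ee_mul_ee (h : 4 ∣ n) : ee n * ee n = 0 := by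
  rw [ee, ← Nat.cast_mul, ZMod.natCast_eq_zero_iff]
  obtain ⟨k, rfl⟩ := h
  have : 4 * k / 2 = 2 * k := by omega
  rw [this]
  exact ⟨k, by ring⟩

lemma ee_ne_zero [NeZero n] (hn : 4 ≤ n) : ee n ≠ 0 := by
  rw [ee, Ne, ZMod.natCast_eq_zero_iff]
  intro h
  have := Nat.le_of_dvd (by omega) h
  omega

lemma pii_ee (h4 : 4 ∣ n) : pii (dvd_trans ⟨2, rfl⟩ h4) (ee n) = 0 := by
  rw [ee, pii, map_natCast, ZMod.natCast_eq_zero_iff]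
  omega

lemma pii_iot (h4 : 4 ∣ n) (y : ZMod 2) : pii (dvd_trans ⟨2, rfl⟩ h4) (iot n y) = 0 := by
  rcases (show ∀ u : ZMod 2, u = 0 ∨ u = 1 by decide) y with rfl | rfl <;> simp [iot_zero, iot_one, pii_ee h4]

lemma mul_ee [NeZero n] (h : 2 ∣ n) (x : ZMod n) : x * ee n = iot n (pii h x) := by
  have hx : ((x.val : ℕ) : ZMod n) = x := by rw [ZMod.natCast_val, ZMod.cast_id]
  have hpx : pii h x = ((x.val : ℕ) : ZMod 2) := by rw [← hx, pii, map_natCast, hx]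
  have hvlt : ((x.val : ℕ) : ZMod 2).val = x.val % 2 := ZMod.val_natCast (a := x.val) 2
  obtain ⟨m, hm⟩ : ∃ m, n = 2 * m := ⟨n / 2, by omega⟩
  have hm2 : n / 2 = m := by omega
  have key : x.val * (n / 2) = (x.val / 2) * n + (x.val % 2) * (n / 2) := by
    rw [hm2]
    calc x.val * m = (2 * (x.val / 2) + x.val % 2) * m := by rw [Nat.div_add_mod]
    _ = (x.val / 2) * (2 * m) + (x.val % 2) * m := by ring
    _ = (x.val / 2) * n + (x.val % 2) * m := by rw [← hm]
  calc x * ee n = ((x.val * (n / 2) : ℕ) : ZMod n) := by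
        rw [Nat.cast_mul, hx, ee]
    _ = (((x.val % 2) * (n / 2) : ℕ) : ZMod n) := by
        rw [key, Nat.cast_add, Nat.cast_mul, ZMod.natCast_self, mul_zero, zero_add]
    _ = iot n (pii h x) := by
        rw [hpx, iot, hvlt, Nat.cast_mul, nsmul_eq_mul, ee]

lemma iot_pi [NeZero n] (h : 2 ∣ n) (x : ZMod n) : iot n (pii h x) = ee n * x := by
  rw [← mul_ee h, mul_comm]

lemma zmod2_unit_eq_one (x : ZMod 2) (hx : IsUnit x) : x = 1 := by
  revert hx; revert x; decide

lemma pii_unit (h : 2 ∣ n) (a : (ZMod n)ˣ) : pii h (↑a : ZMod n) = 1 :=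
  zmod2_unit_eq_one _ ((a.isUnit).map (pii h))

lemma unit_mul_ee [NeZero n] (h : 2 ∣ n) (a : (ZMod n)ˣ) :
    (↑a : ZMod n) * ee n = ee n := by
  rw [mul_ee h, pii_unit h, iot_one]

lemma isUnit_one_sub_ee [NeZero n] (h4 : 4 ∣ n) : IsUnit (1 - ee n) := by
  have h2 : 2 ∣ n := dvd_trans ⟨2, rfl⟩ h4
  have hE : (1 : ZMod n) - ee n = 1 + ee n := by
    have := ee_add_ee h2; linear_combination -this
  rw [hE, ee, ← Nat.cast_one, ← Nat.cast_add, ZMod.isUnit_iff_coprime]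
  obtain ⟨k, rfl⟩ := h4
  have hk : 4 * k / 2 = 2 * k := by omega
  rw [hk]
  have h1 : Nat.Coprime (1 + 2 * k) k :=
    (Nat.coprime_add_mul_right_left 1 k 2).mpr (Nat.coprime_one_left k)
  have h2' : Nat.Coprime (1 + 2 * k) 2 :=
    (Nat.coprime_add_mul_left_left 1 2 k).mpr (Nat.coprime_one_left 2)
  have h4' : Nat.Coprime (1 + 2 * k) 4 := by
    have := h2'.pow_right 2
    norm_num at this
    exact this
  exact h4'.mul_right h1



lemma pii_ee' (h2 : 2 ∣ n) (h4 : 4 ∣ n) : pii h2 (ee n) = 0 := pii_ee h4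

lemma pii_iot' (h2 : 2 ∣ n) (h4 : 4 ∣ n) (y : ZMod 2) : pii h2 (iot n y) = 0 :=
  pii_iot h4 y

lemma zmod2_add_self (t : ZMod 2) : t + t = 0 := by
  rcases (show ∀ u : ZMod 2, u = 0 ∨ u = 1 by decide) t with rfl | rfl <;> simp [two_eq_zero]

lemma unit_mul_iot [NeZero n] (h2 : 2 ∣ n) (a : (ZMod n)ˣ) (t : ZMod 2) :
    (↑a : ZMod n) * iot n t = iot n t := by
  rcases (show ∀ u : ZMod 2, u = 0 ∨ u = 1 by decide) t with rfl | rfl <;> simp [iot_zero, iot_one, unit_mul_ee h2]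

lemma iot_self_add (h2 : 2 ∣ n) (t : ZMod 2) : iot n t + iot n t = 0 := by
  rcases (show ∀ u : ZMod 2, u = 0 ∨ u = 1 by decide) t with rfl | rfl <;> simp [iot_zero, iot_one, ee_add_ee h2]

lemma iot_mul_pi [NeZero n] (h2 : 2 ∣ n) (t : ZMod 2) (x : ZMod n) :
    iot n (t * pii h2 x) = iot n t * x := by
  rcases (show ∀ u : ZMod 2, u = 0 ∨ u = 1 by decide) t with rfl | rfl <;> simp [iot_zero, iot_one, iot_pi h2]

lemma isUnit_one_sub_iot [NeZero n] (h4 : 4 ∣ n) (t : ZMod 2) :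
    IsUnit (1 - iot n t) := by
  rcases (show ∀ u : ZMod 2, u = 0 ∨ u = 1 by decide) t with rfl | rfl <;> simp [iot_zero, iot_one]
  exact isUnit_one_sub_ee h4

def phiFun (h2 : 2 ∣ n) (a : (ZMod n)ˣ) (b c : ZMod 2) :
    ZMod n × ZMod 2 → ZMod n × ZMod 2 :=
  fun p => (↑a * p.1 + iot n (b * p.2), c * pii h2 p.1 + p.2)

lemma phiFun_comp [NeZero n] (h2 : 2 ∣ n) (h4 : 4 ∣ n) (a A : (ZMod n)ˣ) (b c : ZMod 2)
    (hprod : (↑a : ZMod n) * ↑A = 1 - iot n (b * c)) (p : ZMod n × ZMod 2) :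
    phiFun h2 a b c (phiFun h2 A b c p) = p := by
  obtain ⟨x, y⟩ := p
  simp only [phiFun, Prod.mk.injEq]
  have hπ : pii h2 ((↑A : ZMod n) * x + iot n (b * y)) = pii h2 x := by
    rw [map_add, map_mul, pii_unit, pii_iot' h2 h4, one_mul, add_zero]
  constructor
  · have hsplit : iot n (b * (c * pii h2 x + y)) = iot n (b * c) * x + iot n (b * y) := by
      rw [mul_add, iot_add h2, ← mul_assoc, iot_mul_pi h2]
    rw [hsplit]
    have hau : (↑a : ZMod n) * iot n (b * y) = iot n (b * y) := unit_mul_iot h2 a _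
    have hsum : iot n (b * y) + iot n (b * y) = 0 := iot_self_add h2 _
    linear_combination x * hprod + hsum + hau
  · rw [hπ]
    linear_combination zmod2_add_self (c * pii h2 x)

noncomputable def invA [NeZero n] (h4 : 4 ∣ n) (a : (ZMod n)ˣ) (b c : ZMod 2) :
    (ZMod n)ˣ :=
  a⁻¹ * (isUnit_one_sub_iot h4 (b * c)).unit

lemma invA_spec [NeZero n] (h4 : 4 ∣ n) (a : (ZMod n)ˣ) (b c : ZMod 2) :
    (↑a : ZMod n) * ↑(invA h4 a b c) = 1 - iot n (b * c) := by
  rw [invA]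
  push_cast
  rw [← mul_assoc, Units.mul_inv, one_mul, IsUnit.unit_spec]

noncomputable def Phi [NeZero n] (h2 : 2 ∣ n) (h4 : 4 ∣ n)
    (a : (ZMod n)ˣ) (b c : ZMod 2) : AddAut (ZMod n × ZMod 2) where
  toFun := phiFun h2 a b c
  invFun := phiFun h2 (invA h4 a b c) b c
  left_inv p := phiFun_comp h2 h4 (invA h4 a b c) a b c
    (by rw [mul_comm]; exact invA_spec h4 a b c) p
  right_inv p := phiFun_comp h2 h4 a (invA h4 a b c) b c (invA_spec h4 a b c) p
  map_add' p q := by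
    simp only [phiFun, Prod.mk.injEq, Prod.fst_add, Prod.snd_add, mul_add,
      map_add, iot_add h2, Prod.mk_add_mk]
    constructor <;> ring



lemma valCast {m : ℕ} [NeZero m] (x : ZMod m) : ((x.val : ℕ) : ZMod m) = x := by
  rw [ZMod.natCast_val, ZMod.cast_id]

lemma pii_val [NeZero n] (h2 : 2 ∣ n) (x : ZMod n) :
    pii h2 x = ((x.val : ℕ) : ZMod 2) := by
  rw [← valCast x, pii, map_natCast, valCast]

lemma iot_inj [NeZero n] (hn : 4 ≤ n) {s t : ZMod 2} (hst : iot n s = iot n t) :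
    s = t := by
  have he := ee_ne_zero (n := n) hn
  have hcase : ∀ u : ZMod 2, u = 0 ∨ u = 1 := by decide
  rcases hcase s with rfl | rfl <;> rcases hcase t with rfl | rfl
  · rfl
  · rw [iot_zero, iot_one] at hst; exact absurd hst.symm he
  · rw [iot_zero, iot_one] at hst; exact absurd hst he
  · rfl

lemma Phi_inj [NeZero n] (h2 : 2 ∣ n) (h4 : 4 ∣ n) (hn : 4 ≤ n) :
    Function.Injective
      (fun x : (ZMod n)ˣ × ZMod 2 × ZMod 2 => Phi h2 h4 x.1 x.2.1 x.2.2) := by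
  rintro ⟨a, b, c⟩ ⟨a', b', c'⟩ h
  simp only at h
  have h1 := DFunLike.congr_fun h ((1 : ZMod n), (0 : ZMod 2))
  have h0 := DFunLike.congr_fun h ((0 : ZMod n), (1 : ZMod 2))
  simp only [Phi, AddEquiv.coe_mk, Equiv.coe_fn_mk, phiFun, mul_zero, mul_one,
    iot_zero, add_zero, map_one, map_zero, zero_add, Prod.mk.injEq] at h1 h0
  obtain ⟨ha, hc⟩ := h1
  obtain ⟨hb, -⟩ := h0
  have hb' : b = b' := iot_inj hn hb
  have ha' : a = a' := Units.ext ha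
  simp [ha', hb', hc]

lemma order_two [NeZero n] (h2 : 2 ∣ n) (u : ZMod n) (hu : u + u = 0) :
    ∃ b : ZMod 2, u = iot n b := by
  have hvlt : u.val < n := ZMod.val_lt u
  have hcast : ((u.val + u.val : ℕ) : ZMod n) = 0 := by
    rw [Nat.cast_add, valCast]; exact hu
  rw [ZMod.natCast_eq_zero_iff] at hcast
  have hn0 : n ≠ 0 := NeZero.ne n
  have : u.val = 0 ∨ u.val = n / 2 := by
    rcases hcast with ⟨k, hk⟩
    rcases h2 with ⟨m, hm⟩
    have hn1 : 1 ≤ n := Nat.one_le_iff_ne_zero.mpr hn0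
    have hk1 : k ≤ 1 := by nlinarith
    interval_cases k <;> omega
  rcases this with h | h
  · exact ⟨0, by rw [iot_zero, ← valCast u, h, Nat.cast_zero]⟩
  · exact ⟨1, by rw [iot_one, ← valCast u, h, ee]⟩

lemma val_smul_iot (b y : ZMod 2) : y.val • iot n b = iot n (b * y) := by
  rcases (show ∀ u : ZMod 2, u = 0 ∨ u = 1 by decide) b with rfl | rfl <;> rcases (show ∀ u : ZMod 2, u = 0 ∨ u = 1 by decide) y with rfl | rfl <;>
    simp [iot_zero, iot_one, ZMod.val_one, two_eq_zero]

lemma Phi_surj [NeZero n] (h2 : 2 ∣ n) (h4 : 4 ∣ n) :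
    Function.Surjective
      (fun x : (ZMod n)ˣ × ZMod 2 × ZMod 2 => Phi h2 h4 x.1 x.2.1 x.2.2) := by
  intro F
  obtain ⟨b, hb⟩ : ∃ b : ZMod 2, (F ((0 : ZMod n), (1 : ZMod 2))).1 = iot n b := by
    apply order_two h2
    have h11 : ((0 : ZMod n), (1 : ZMod 2)) + (0, 1) = 0 := by
      simp [Prod.ext_iff, two_eq_zero]
    have := F.map_add ((0 : ZMod n), (1 : ZMod 2)) (0, 1)
    rw [h11, map_zero] at this
    exact congrArg Prod.fst this.symm
  set a₀ : ZMod n := (F ((1 : ZMod n), (0 : ZMod 2))).1 with ha₀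
  set c : ZMod 2 := (F ((1 : ZMod n), (0 : ZMod 2))).2 with hc
  set d : ZMod 2 := (F ((0 : ZMod n), (1 : ZMod 2))).2 with hd
  have hform : ∀ (x : ZMod n) (y : ZMod 2),
      F (x, y) = (a₀ * x + iot n (b * y), c * pii h2 x + d * y) := by
    intro x y
    have hxy : (x, y) = x.val • ((1 : ZMod n), (0 : ZMod 2))
        + y.val • ((0 : ZMod n), (1 : ZMod 2)) := by
      simp [Prod.ext_iff, nsmul_eq_mul, valCast]
    rw [hxy, map_add, map_nsmul, map_nsmul]
    have hP : F ((1 : ZMod n), (0 : ZMod 2)) = (a₀, c) := rfl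
    have hQ : F ((0 : ZMod n), (1 : ZMod 2)) = (iot n b, d) := by
      rw [Prod.ext_iff]; exact ⟨hb, rfl⟩
    rw [hP, hQ]
    simp only [Prod.smul_mk, Prod.mk_add_mk, Prod.mk.injEq]
    constructor
    · rw [val_smul_iot]
      simp only [nsmul_eq_mul]
      rw [valCast]
      ring
    · simp only [nsmul_eq_mul]
      rw [← pii_val h2, valCast]
      ring
  -- a₀ is a unit
  obtain ⟨⟨X, Y⟩, hXY⟩ := F.surjective ((1 : ZMod n), (0 : ZMod 2))
  rw [hform, Prod.mk.injEq] at hXY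
  obtain ⟨hX1, -⟩ := hXY
  have haunit : IsUnit a₀ := by
    have h1 : a₀ * X = 1 - iot n (b * Y) := by linear_combination hX1
    have : IsUnit (a₀ * X) := h1 ▸ isUnit_one_sub_iot h4 (b * Y)
    exact isUnit_of_mul_isUnit_left this
  obtain ⟨aU, haU⟩ := haunit
  -- d = 1
  obtain ⟨⟨X', Y'⟩, hXY'⟩ := F.surjective ((0 : ZMod n), (1 : ZMod 2))
  rw [hform, Prod.mk.injEq] at hXY'
  obtain ⟨hX1', hX2'⟩ := hXY'
  have hπX' : pii h2 X' = 0 := by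
    have hX'eq : X' = ↑aU⁻¹ * (a₀ * X') := by
      rw [← mul_assoc, ← haU, Units.inv_mul, one_mul]
    have ha0X' : a₀ * X' = - iot n (b * Y') := by linear_combination hX1'
    rw [hX'eq, ha0X', map_mul, map_neg, pii_iot' h2 h4, neg_zero, mul_zero]
  have hd1 : d = 1 := by
    rw [hπX', mul_zero, zero_add] at hX2'
    rcases (show ∀ u : ZMod 2, u = 0 ∨ u = 1 by decide) d with h | h
    · rw [h, zero_mul] at hX2'
      exact absurd hX2' (by decide)
    · exact h
  refine ⟨⟨aU, b, c⟩, ?_⟩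
  apply AddEquiv.ext
  rintro ⟨x, y⟩
  show phiFun h2 aU b c (x, y) = F (x, y)
  rw [hform, phiFun, haU, hd1, one_mul]


def mulAutCongr {G H : Type*} [Mul G] [Mul H] (e : G ≃* H) : MulAut G ≃ MulAut H where
  toFun f := (e.symm.trans f).trans e
  invFun f := (e.trans f).trans e.symm
  left_inv f := by ext x; simp
  right_inv f := by ext x; simp

end AutAux

theorem aut_order_of_zn_prod_z2_of_four_dvd (n : ℕ) (h4 : n % 4 = 0) (hn : 4 ≤ n) :
    Nat.card (MulAut (Multiplicative (ZMod n) × Multiplicative (ZMod 2))) =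
      4 * Nat.totient n := by
  haveI : NeZero n := ⟨by omega⟩
  have h4' : 4 ∣ n := Nat.dvd_of_mod_eq_zero h4
  have h2 : 2 ∣ n := dvd_trans ⟨2, rfl⟩ h4'
  have e1 : MulAut (Multiplicative (ZMod n) × Multiplicative (ZMod 2)) ≃
      MulAut (Multiplicative (ZMod n × ZMod 2)) :=
    AutAux.mulAutCongr (MulEquiv.prodMultiplicative (G := ZMod n) (H := ZMod 2)).symm
  have e2 : MulAut (Multiplicative (ZMod n × ZMod 2)) ≃ AddAut (ZMod n × ZMod 2) :=
    AddEquiv.toMultiplicative.symm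
  have e3 : ((ZMod n)ˣ × ZMod 2 × ZMod 2) ≃ AddAut (ZMod n × ZMod 2) :=
    Equiv.ofBijective _ ⟨AutAux.Phi_inj h2 h4' hn, AutAux.Phi_surj h2 h4'⟩
  rw [Nat.card_congr (e1.trans (e2.trans e3.symm))]
  rw [Nat.card_prod, Nat.card_prod, Nat.card_eq_fintype_card,
    ZMod.card_units_eq_totient, Nat.card_zmod]
  ring
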